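/- Over the ranked alphabet {f(,), a, b, c}, the finite (hence regular) tree language L′ = {f(a,b), f(a,c), f(b,a), f(b,c), f(c,a), f(c,b)} is not recognized by any top-down residual finite tree automaton. Hence the class of ↓-RFTA-recognizable languages is strictly contained in the class of regular tree languages. -/

import Mathlib

/-- Terms over a ranked alphabet `F` with arity function `arity`. -/
inductive Term (F : Type) (arity : F → ℕ) : Type where
  | node (f : F) (children : Fin (arity f) → Term F arity) : Term F arity

/-- Contexts: terms with exactly one occurrence of the hole `◇`. -/
inductive Ctx (F : Type) (arity : F → ℕ) : Type where
  | hole : Ctx F arity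
  | node (f : F) (i : Fin (arity f)) (c : Ctx F arity)
      (sib : (j : Fin (arity f)) → j ≠ i → Term F arity) : Ctx F arity

/-- `c.fill t` replaces the hole of `c` by the term `t`. -/
def Ctx.fill {F : Type} {arity : F → ℕ} : Ctx F arity → Term F arity → Term F arity
  | .hole, t => t
  | .node f i c sib, t => .node f (fun j => if h : j = i then c.fill t else sib j h)

/-- Bottom-up residual of the tree language `L` w.r.t. the term `t`:
the set of contexts `c` with `c[t] ∈ L`. -/
def bres {F : Type} {arity : F → ℕ} (L : Set (Term F arity)) (t : Term F arity) :
    Set (Ctx F arity) := {c | c.fill t ∈ L}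

/-- Top-down residual of the tree language `L` w.r.t. the context `c`:
the set of terms `t` with `c[t] ∈ L`. -/
def tres {F : Type} {arity : F → ℕ} (L : Set (Term F arity)) (c : Ctx F arity) :
    Set (Term F arity) := {t | c.fill t ∈ L}

/-- Top-down finite tree automaton with state type `Q`:
initial states and a set of rules `q(f) → f(q₁,…,qₙ)`. -/
structure TDTA (F : Type) (arity : F → ℕ) (Q : Type) where
  initial : Set Q
  rules : (f : F) → Q → (Fin (arity f) → Q) → Prop

/-- `A.Accepts q t`: the state `q` accepts the term `t`. -/
inductive TDTA.Accepts {F Q : Type} {arity : F → ℕ} (A : TDTA F arity Q) :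
    Q → Term F arity → Prop
  | node {f : F} {q : Q} {qs : Fin (arity f) → Q} {ch : Fin (arity f) → Term F arity} :
      A.rules f q qs → (∀ i, A.Accepts (qs i) (ch i)) → A.Accepts q (.node f ch)

/-- State language `L_q`: the set of terms accepted by the state `q`. -/
def TDTA.stateLang {F Q : Type} {arity : F → ℕ} (A : TDTA F arity Q) (q : Q) :
    Set (Term F arity) := {t | A.Accepts q t}

/-- Language recognized by a top-down tree automaton. -/
def TDTA.lang {F Q : Type} {arity : F → ℕ} (A : TDTA F arity Q) : Set (Term F arity) :=
  {t | ∃ q ∈ A.initial, A.Accepts q t}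

/-- `A.CtxReach q c q'`: running from state `q` on the context `c`, the automaton can
label the hole position with `q'`, accepting every full subterm of `c` hanging off the
path to the hole from its assigned state. -/
inductive TDTA.CtxReach {F Q : Type} {arity : F → ℕ} (A : TDTA F arity Q) :
    Q → Ctx F arity → Q → Prop
  | hole (q : Q) : A.CtxReach q .hole q
  | node {f : F} {q : Q} {qs : Fin (arity f) → Q} {i : Fin (arity f)} {c : Ctx F arity}
      {sib : (j : Fin (arity f)) → j ≠ i → Term F arity} {q' : Q} :
      A.rules f q qs → A.CtxReach (qs i) c q' →
      (∀ j (h : j ≠ i), A.Accepts (qs j) (sib j h)) →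
      A.CtxReach q (.node f i c sib) q'

/-- `Q_c`: the set of states that `A` can reach at the hole position when running
from an initial state on the context `c`. -/
def TDTA.Qc {F Q : Type} {arity : F → ℕ} (A : TDTA F arity Q) (c : Ctx F arity) : Set Q :=
  {q | ∃ qi ∈ A.initial, A.CtxReach qi c q}

/-- Top-down residual finite tree automaton: each state language is a top-down
residual of `L(A)`. -/
def IsTDRFTA {F Q : Type} {arity : F → ℕ} (A : TDTA F arity Q) : Prop :=
  ∀ q : Q, ∃ c : Ctx F arity, A.stateLang q = tres A.lang c

/-- The ranked alphabet `{f(,), a, b, c}`. -/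
inductive Symb4 : Type where
  | f : Symb4
  | a : Symb4
  | b : Symb4
  | c : Symb4

@[reducible] def ar4 : Symb4 → ℕ
  | .f => 2
  | _ => 0

def tA : Term Symb4 ar4 := .node .a Fin.elim0
def tB : Term Symb4 ar4 := .node .b Fin.elim0
def tC : Term Symb4 ar4 := .node .c Fin.elim0

def pair4 (t1 t2 : Term Symb4 ar4) : Fin (ar4 Symb4.f) → Term Symb4 ar4 := ![t1, t2]

/-- The language `L′ = {f(a,b), f(a,c), f(b,a), f(b,c), f(c,a), f(c,b)}`. -/
def L17 : Set (Term Symb4 ar4) :=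
  {.node .f (pair4 tA tB), .node .f (pair4 tA tC), .node .f (pair4 tB tA),
   .node .f (pair4 tB tC), .node .f (pair4 tC tA), .node .f (pair4 tC tB)}

/- ===== auxiliary material ===== -/

deriving instance DecidableEq for Symb4
instance : Fintype Symb4 := ⟨{Symb4.f, Symb4.a, Symb4.b, Symb4.c}, fun x => by cases x <;> simp⟩

/-- The three constant terms. -/
def Konst (t : Term Symb4 ar4) : Prop := t = tA ∨ t = tB ∨ t = tC

lemma key_mem (x y : Term Symb4 ar4) (hx : Konst x) (hy : Konst y) (hxy : x ≠ y) :
    Term.node .f (pair4 x y) ∈ L17 := by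
  rcases hx with rfl|rfl|rfl <;> rcases hy with rfl|rfl|rfl <;>
    simp_all [L17, tA, tB, tC]

lemma head_f (g : Symb4) (ch : Fin (ar4 g) → Term Symb4 ar4)
    (h : Term.node g ch ∈ L17) : g = Symb4.f := by
  simp only [L17, Set.mem_insert_iff, Set.mem_singleton_iff] at h
  rcases h with h|h|h|h|h|h <;> (injection h with h1 h2)

lemma mem_L17_iff (ch : Fin 2 → Term Symb4 ar4) :
    Term.node .f ch ∈ L17 ↔ Konst (ch 0) ∧ Konst (ch 1) ∧ ch 0 ≠ ch 1 := by
  constructor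
  · intro h
    simp only [L17, Set.mem_insert_iff, Set.mem_singleton_iff, Term.node.injEq,
      heq_eq_eq, true_and] at h
    rcases h with rfl|rfl|rfl|rfl|rfl|rfl <;>
      refine ⟨?_, ?_, ?_⟩ <;> simp [Konst, pair4, tA, tB, tC]
  · rintro ⟨h0, h1, hne⟩
    have hch : ch = pair4 (ch 0) (ch 1) := by
      funext j; fin_cases j <;> simp [pair4]
    rw [show Term.node Symb4.f ch = Term.node Symb4.f (pair4 (ch 0) (ch 1)) by rw [← hch]]
    exact key_mem _ _ h0 h1 hne

lemma tAB : tA ≠ tB := by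
  intro h; simp only [tA, tB] at h; injection h with h1 _; exact Symb4.noConfusion h1

lemma tAC : tA ≠ tC := by
  intro h; simp only [tA, tC] at h; injection h with h1 _; exact Symb4.noConfusion h1

lemma tBC : tB ≠ tC := by
  intro h; simp only [tB, tC] at h; injection h with h1 _; exact Symb4.noConfusion h1

lemma third (x s : Term Symb4 ar4) (hx : Konst x) (hs : Konst s) (hxs : x ≠ s) :
    ∃ y, Konst y ∧ y ≠ x ∧ y ≠ s := by
  rcases hx with rfl|rfl|rfl <;> rcases hs with rfl|rfl|rfl
  · exact absurd rfl hxs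
  · exact ⟨tC, Or.inr (Or.inr rfl), tAC.symm, tBC.symm⟩
  · exact ⟨tB, Or.inr (Or.inl rfl), tAB.symm, tBC⟩
  · exact ⟨tC, Or.inr (Or.inr rfl), tBC.symm, tAC.symm⟩
  · exact absurd rfl hxs
  · exact ⟨tA, Or.inl rfl, tAB, tAC⟩
  · exact ⟨tB, Or.inr (Or.inl rfl), tBC, tAB.symm⟩
  · exact ⟨tA, Or.inl rfl, tAC, tAB⟩
  · exact absurd rfl hxs

lemma exists_other (c : Ctx Symb4 ar4) (x : Term Symb4 ar4) (hx : Konst x)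
    (h : c.fill x ∈ L17) : ∃ y, Konst y ∧ y ≠ x ∧ c.fill y ∈ L17 := by
  cases c with
  | hole =>
    exfalso
    rcases hx with rfl|rfl|rfl <;>
      simp [Ctx.fill, L17, tA, tB, tC, pair4] at h
  | node g i c' sib =>
    simp only [Ctx.fill] at h
    have hg : g = Symb4.f := head_f _ _ h
    subst hg
    obtain ⟨h0, h1, hne⟩ := (mem_L17_iff _).mp h
    have hall : ∀ j : Fin 2, Konst (if hj : j = i then c'.fill x else sib j hj) := by
      intro j; fin_cases j; exacts [h0, h1]
    have hKi : Konst (c'.fill x) := by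
      have := hall i; rwa [dif_pos rfl] at this
    cases c' with
    | node g' i' c'' sib' =>
      exfalso
      simp only [Ctx.fill] at hKi
      have har : ar4 g' = 0 := by
        rcases hKi with he|he|he <;>
          (simp only [tA, tB, tC] at he; injection he with hg' _; subst hg'; rfl)
      exact (har ▸ i').elim0
    | hole =>
      simp only [Ctx.fill] at hall hne
      obtain ⟨k, hki, hcov⟩ : ∃ k : Fin 2, k ≠ i ∧ ∀ j : Fin 2, j = i ∨ j = k := by
        fin_cases i
        · exact ⟨1, by decide, by decide⟩
        · exact ⟨0, by decide, by decide⟩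
      have hKs : Konst (sib k hki) := by
        have := hall k; rwa [dif_neg hki] at this
      have hxs : x ≠ sib k hki := by
        have h2 : ∀ j1 j2 : Fin 2, j1 ≠ j2 →
            (if hj : j1 = i then x else sib j1 hj) ≠
              (if hj : j2 = i then x else sib j2 hj) := by
          intro j1 j2 hj
          fin_cases j1 <;> fin_cases j2 <;>
            first
            | exact absurd rfl hj
            | exact hne
            | exact fun hE => hne hE.symm
        have := h2 i k (Ne.symm hki)
        rwa [dif_pos rfl, dif_neg hki] at this
      obtain ⟨y, hKy, hyx, hys⟩ := third x _ hx hKs hxs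
      refine ⟨y, hKy, hyx, ?_⟩
      show Term.node Symb4.f (fun j => if hj : j = i then y else sib j hj) ∈ L17
      have hne' : ∀ j1 j2 : Fin 2, j1 = i → j2 ≠ i →
          (if hj : j1 = i then y else sib j1 hj) ≠
            (if hj : j2 = i then y else sib j2 hj) := by
        intro j1 j2 hj1 hj2
        rw [dif_pos hj1, dif_neg hj2]
        rcases hcov j2 with h'|h'
        · exact absurd h' hj2
        · subst h'; exact hys
      have hKc : ∀ j : Fin 2, Konst (if hj : j = i then y else sib j hj) := by
        intro j; by_cases hj : j = i
        · rw [dif_pos hj]; exact hKy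
        · rw [dif_neg hj]; have := hall j; rwa [dif_neg hj] at this
      refine (mem_L17_iff _).mpr ⟨hKc 0, hKc 1, ?_⟩
      rcases hcov 0 with h0|h0 <;> rcases hcov 1 with h1|h1
      · exact absurd (h0.trans h1.symm) (by decide)
      · exact hne' 0 1 h0 (fun hE => hki (h1.symm.trans hE))
      · exact (hne' 1 0 h1 (fun hE => hki (h0.symm.trans hE))).symm
      · exact absurd (h0.trans h1.symm) (by decide)

/-- The automaton recognizing `L17`. -/
def A1 : TDTA Symb4 ar4 (Option Symb4) where
  initial := {none}
  rules := fun g q qs =>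
    match q with
    | none => g = Symb4.f ∧ ∃ u v : Symb4, u ≠ Symb4.f ∧ v ≠ Symb4.f ∧ u ≠ v ∧
        ∀ i : Fin (ar4 g), qs i = if (i : ℕ) = 0 then some u else some v
    | some s => g = s ∧ s ≠ Symb4.f

lemma acc_some_inv {s : Symb4} {t : Term Symb4 ar4} (h : A1.Accepts (some s) t) :
    s ≠ Symb4.f ∧ ∃ ch, t = Term.node s ch := by
  cases h with
  | @node g q qs ch hr _ =>
    obtain ⟨hg, hs⟩ := hr
    subst hg
    exact ⟨hs, ch, rfl⟩

lemma acc_some_konst {s : Symb4} {t : Term Symb4 ar4} (h : A1.Accepts (some s) t) :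
    Konst t := by
  obtain ⟨hs, ch, rfl⟩ := acc_some_inv h
  cases s with
  | f => exact absurd rfl hs
  | a => left; show _ = tA; unfold tA; congr; funext j; exact j.elim0
  | b => right; left; show _ = tB; unfold tB; congr; funext j; exact j.elim0
  | c => right; right; show _ = tC; unfold tC; congr; funext j; exact j.elim0

lemma acc_const (s : Symb4) (hs : s ≠ Symb4.f) :
    ∀ ch : Fin (ar4 s) → Term Symb4 ar4, A1.Accepts (some s) (Term.node s ch) := by
  intro ch
  refine TDTA.Accepts.node (qs := fun _ => none) ⟨rfl, hs⟩ ?_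
  cases s with
  | f => exact absurd rfl hs
  | a => exact fun i => i.elim0
  | b => exact fun i => i.elim0
  | c => exact fun i => i.elim0

lemma A1_lang : A1.lang = L17 := by
  ext t
  constructor
  · rintro ⟨q, hq, hacc⟩
    have hq' : q = none := hq
    subst hq'
    cases hacc with
    | @node g q qs ch hr hch =>
      obtain ⟨hg, u, v, hu, hv, huv, hqs⟩ := hr
      subst hg
      have hq0 : qs 0 = some u := by rw [hqs 0]; rfl
      have hq1 : qs 1 = some v := by rw [hqs 1]; rfl
      have a0 : A1.Accepts (some u) (ch 0) := hq0 ▸ hch 0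
      have a1 : A1.Accepts (some v) (ch 1) := hq1 ▸ hch 1
      refine (mem_L17_iff _).mpr ⟨acc_some_konst a0, acc_some_konst a1, ?_⟩
      obtain ⟨-, ch0, he0⟩ := acc_some_inv a0
      obtain ⟨-, ch1, he1⟩ := acc_some_inv a1
      rw [he0, he1]
      intro hE
      injection hE with h1 _
      exact huv h1
  · intro ht
    refine ⟨none, rfl, ?_⟩
    have acc : ∀ u v : Symb4, u ≠ Symb4.f → v ≠ Symb4.f → u ≠ v →
        ∀ x y : Term Symb4 ar4, A1.Accepts (some u) x → A1.Accepts (some v) y →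
        A1.Accepts none (Term.node .f (pair4 x y)) := by
      intro u v hu hv huv x y hx hy
      refine TDTA.Accepts.node (qs := fun i => if (i : ℕ) = 0 then some u else some v)
        ⟨rfl, u, v, hu, hv, huv, fun _ => rfl⟩ ?_
      intro i; fin_cases i
      · exact hx
      · exact hy
    simp only [L17, Set.mem_insert_iff, Set.mem_singleton_iff] at ht
    rcases ht with rfl|rfl|rfl|rfl|rfl|rfl
    · exact acc .a .b (by simp) (by simp) (by simp) _ _
        (acc_const .a (by simp) Fin.elim0) (acc_const .b (by simp) Fin.elim0)
    · exact acc .a .c (by simp) (by simp) (by simp) _ _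
        (acc_const .a (by simp) Fin.elim0) (acc_const .c (by simp) Fin.elim0)
    · exact acc .b .a (by simp) (by simp) (by simp) _ _
        (acc_const .b (by simp) Fin.elim0) (acc_const .a (by simp) Fin.elim0)
    · exact acc .b .c (by simp) (by simp) (by simp) _ _
        (acc_const .b (by simp) Fin.elim0) (acc_const .c (by simp) Fin.elim0)
    · exact acc .c .a (by simp) (by simp) (by simp) _ _
        (acc_const .c (by simp) Fin.elim0) (acc_const .a (by simp) Fin.elim0)
    · exact acc .c .b (by simp) (by simp) (by simp) _ _
        (acc_const .c (by simp) Fin.elim0) (acc_const .b (by simp) Fin.elim0)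

/-- `L′` is regular (it is recognized by some ↓-FTA) but it is not
recognized by any top-down residual finite tree automaton; hence the class of
↓-RFTA-recognizable languages is strictly contained in the regular tree languages. -/
theorem L17_not_TDRFTA_recognizable :
    (∃ (Q : Type) (_ : Fintype Q) (A : TDTA Symb4 ar4 Q), A.lang = L17) ∧
    (∀ (Q : Type) [Fintype Q], ∀ A : TDTA Symb4 ar4 Q, IsTDRFTA A → A.lang ≠ L17) := by
  constructor
  · exact ⟨Option Symb4, inferInstance, A1, A1_lang⟩
  · intro Q _ A hres hlang
    have hab : Term.node .f (pair4 tA tB) ∈ A.lang := by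
      rw [hlang]; exact Or.inl rfl
    obtain ⟨q0, hq0, hacc⟩ := hab
    cases hacc with
    | @node g q qs ch hr hch =>
      have h0 : A.Accepts (qs 0) tA := hch 0
      have h1 : A.Accepts (qs 1) tB := hch 1
      obtain ⟨c0, hc0⟩ := hres (qs 0)
      obtain ⟨c1, hc1⟩ := hres (qs 1)
      have m0 : c0.fill tA ∈ L17 := by
        have : tA ∈ tres A.lang c0 := hc0 ▸ h0
        rwa [hlang] at this
      have m1 : c1.fill tB ∈ L17 := by
        have : tB ∈ tres A.lang c1 := hc1 ▸ h1
        rwa [hlang] at this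
      obtain ⟨y0, hK0, hne0, hm0⟩ := exists_other c0 tA (Or.inl rfl) m0
      obtain ⟨y1, hK1, hne1, hm1⟩ := exists_other c1 tB (Or.inr (Or.inl rfl)) m1
      have common : ∃ t, c0.fill t ∈ L17 ∧ c1.fill t ∈ L17 := by
        rcases hK0 with rfl|rfl|rfl
        · exact absurd rfl hne0
        · exact ⟨tB, hm0, m1⟩
        · rcases hK1 with rfl|rfl|rfl
          · exact ⟨tA, m0, hm1⟩
          · exact absurd rfl hne1
          · exact ⟨tC, hm0, hm1⟩
      obtain ⟨t, ht0, ht1⟩ := common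
      have a0 : A.Accepts (qs 0) t := by
        have : t ∈ tres A.lang c0 := by rw [hlang]; exact ht0
        rw [← hc0] at this; exact this
      have a1 : A.Accepts (qs 1) t := by
        have : t ∈ tres A.lang c1 := by rw [hlang]; exact ht1
        rw [← hc1] at this; exact this
      have hmem : Term.node .f (fun _ => t) ∈ A.lang := by
        refine ⟨q0, hq0, TDTA.Accepts.node hr ?_⟩
        intro i; fin_cases i
        · exact a0
        · exact a1
      rw [hlang] at hmem
      exact ((mem_L17_iff _).mp hmem).2.2 rfl
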